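/- The nuclear norm proximal operator (uniform weight case): for Y ∈ ℝ^{m×n} with SVD Y = UΣVᵀ and uniform weight w ≥ 0, the matrix X̂ = U S_{w/2}(Σ) Vᵀ, where S_{w/2}(Σ)_{ii} = max(Σ_{ii} − w/2, 0), minimizes ‖Y − X‖_F² + w‖X‖_* over all X ∈ ℝ^{m×n}, where ‖X‖_* is the nuclear norm. -/

import Mathlib

open Matrix BigOperators

noncomputable def fnorm {m n : ℕ} (A : Matrix (Fin m) (Fin n) ℝ) : ℝ :=
  Real.sqrt (∑ i, ∑ j, (A i j) ^ 2)

/-- Singular values of a real matrix (square roots of the eigenvalues of `XᵀX`). -/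
noncomputable def sv {m n : ℕ} (X : Matrix (Fin m) (Fin n) ℝ) (i : Fin n) : ℝ :=
  Real.sqrt ((show (Xᵀ * X).IsHermitian by
    rw [← Matrix.conjTranspose_eq_transpose_of_trivial]
    exact Matrix.isHermitian_conjTranspose_mul_self X).eigenvalues i)

/-- Nuclear norm: sum of singular values. -/
noncomputable def nuclearNorm {m n : ℕ} (X : Matrix (Fin m) (Fin n) ℝ) : ℝ :=
  ∑ i, sv X i

namespace Stmt6Aux
open Polynomial


/-- Rectangular diagonal matrix. -/
noncomputable def rd {m n : ℕ} (f : Fin m → ℝ) : Matrix (Fin m) (Fin n) ℝ :=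
  Matrix.of fun i j => if (i : ℕ) = (j : ℕ) then f i else 0

lemma sum_ite_coe {m : ℕ} (k : ℕ) (f : Fin m → ℝ) :
    (∑ i : Fin m, if (i : ℕ) = k then f i else 0) =
      if h : k < m then f ⟨k, h⟩ else 0 := by
  split_ifs with h
  · rw [Finset.sum_eq_single_of_mem ⟨k, h⟩ (Finset.mem_univ _)]
    · simp
    · intro b _ hb
      rw [if_neg]
      intro hbk
      exact hb (Fin.ext hbk)
  · apply Finset.sum_eq_zero
    intro i _
    rw [if_neg]
    intro hik
    omega

lemma rd_mulVec {m n : ℕ} (f : Fin m → ℝ) (u : Fin n → ℝ) (i : Fin m) :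
    (rd f *ᵥ u) i = if h : (i : ℕ) < n then f i * u ⟨i, h⟩ else 0 := by
  have h0 : (rd f *ᵥ u) i = ∑ j : Fin n, (if (i : ℕ) = (j : ℕ) then f i else 0) * u j := by
    simp [rd, Matrix.mulVec, dotProduct]
  have h1 : ∀ j : Fin n, (if (i : ℕ) = (j : ℕ) then f i else 0) * u j
      = (if (j : ℕ) = (i : ℕ) then f i * u j else 0) := by
    intro j
    by_cases hc : (i : ℕ) = (j : ℕ)
    · rw [if_pos hc, if_pos hc.symm]
    · rw [if_neg hc, if_neg (fun h => hc h.symm), zero_mul]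
  rw [h0, Finset.sum_congr rfl (fun j _ => h1 j), sum_ite_coe]

lemma rd_transpose_mul_rd {m n : ℕ} (f g : Fin m → ℝ) :
    (rd f : Matrix (Fin m) (Fin n) ℝ)ᵀ * (rd g : Matrix (Fin m) (Fin n) ℝ)
      = Matrix.diagonal (fun j : Fin n =>
          if h : (j : ℕ) < m then f ⟨j, h⟩ * g ⟨j, h⟩ else 0) := by
  ext j k
  show (∑ i, (rd f : Matrix (Fin m) (Fin n) ℝ) i j * (rd g : Matrix (Fin m) (Fin n) ℝ) i k) = _
  by_cases hjk : j = k
  · subst hjk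
    rw [Matrix.diagonal_apply_eq]
    have : ∀ i : Fin m, (rd f : Matrix (Fin m) (Fin n) ℝ) i j *
        (rd g : Matrix (Fin m) (Fin n) ℝ) i j
        = (if (i : ℕ) = (j : ℕ) then f i * g i else 0) := by
      intro i
      show (if (i:ℕ) = (j:ℕ) then f i else 0) * (if (i:ℕ) = (j:ℕ) then g i else 0) = _
      split_ifs <;> simp
    rw [Finset.sum_congr rfl (fun i _ => this i)]
    rw [show (∑ i : Fin m, if (i : ℕ) = (j : ℕ) then f i * g i else 0)
        = if h : (j:ℕ) < m then f ⟨j, h⟩ * g ⟨j, h⟩ else 0 from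
      sum_ite_coe (j : ℕ) (fun i => f i * g i)]
  · rw [Matrix.diagonal_apply_ne _ hjk]
    apply Finset.sum_eq_zero
    intro i _
    show (if (i:ℕ) = (j:ℕ) then f i else 0) * (if (i:ℕ) = (k:ℕ) then g i else 0) = 0
    have : (j : ℕ) ≠ (k : ℕ) := fun h => hjk (Fin.ext h)
    split_ifs <;> simp_all

lemma dot_mulVec_self {k l : ℕ} (M : Matrix (Fin k) (Fin l) ℝ) (h : Mᵀ * M = 1)
    (v : Fin l → ℝ) : (M *ᵥ v) ⬝ᵥ (M *ᵥ v) = v ⬝ᵥ v := by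
  rw [Matrix.dotProduct_mulVec, ← Matrix.mulVec_transpose, Matrix.mulVec_mulVec, h,
    Matrix.one_mulVec]

lemma rd_mulVec_dot_le {m n : ℕ} (g : Fin m → ℝ) (hg0 : ∀ i, 0 ≤ g i) (hg1 : ∀ i, g i ≤ 1)
    (u : Fin n → ℝ) : ((rd g : Matrix (Fin m) (Fin n) ℝ) *ᵥ u) ⬝ᵥ (rd g *ᵥ u) ≤ u ⬝ᵥ u := by
  unfold dotProduct
  calc ∑ i : Fin m, (rd g *ᵥ u) i * (rd g *ᵥ u) i
      ≤ ∑ i : Fin m, (if h : (i : ℕ) < n then u ⟨i, h⟩ * u ⟨i, h⟩ else 0) := by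
        apply Finset.sum_le_sum
        intro i _
        rw [rd_mulVec]
        split_ifs with h
        · have h1 : 0 ≤ g i := hg0 i
          have h2 : g i ≤ 1 := hg1 i
          have h3 : g i * g i ≤ 1 := by nlinarith
          nlinarith [mul_self_nonneg (u ⟨i, h⟩),
            mul_le_mul_of_nonneg_right h3 (mul_self_nonneg (u ⟨i, h⟩))]
        · simp
    _ = ∑ i : Fin m, ∑ j : Fin n, (if (j : ℕ) = (i : ℕ) then u j * u j else 0) := by
        apply Finset.sum_congr rfl
        intro i _
        rw [sum_ite_coe]
    _ = ∑ j : Fin n, ∑ i : Fin m, (if (j : ℕ) = (i : ℕ) then u j * u j else 0) :=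
        Finset.sum_comm
    _ ≤ ∑ j : Fin n, u j * u j := by
        apply Finset.sum_le_sum
        intro j _
        have : ∀ i : Fin m, (if (j : ℕ) = (i : ℕ) then u j * u j else 0)
            = (if (i : ℕ) = (j : ℕ) then u j * u j else 0) := by
          intro i; split_ifs <;> simp_all <;> omega
        rw [Finset.sum_congr rfl (fun i _ => this i), sum_ite_coe]
        split_ifs
        · exact le_refl _
        · exact mul_self_nonneg _

lemma charpoly_mul_mul {n : ℕ} (P A Q : Matrix (Fin n) (Fin n) ℝ)
    (h1 : P * Q = 1) (h2 : Q * P = 1) : (P * A * Q).charpoly = A.charpoly := by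
  unfold Matrix.charpoly
  have hmul : ∀ M N : Matrix (Fin n) (Fin n) ℝ,
      (C : ℝ →+* ℝ[X]).mapMatrix (M * N)
        = (C : ℝ →+* ℝ[X]).mapMatrix M * (C : ℝ →+* ℝ[X]).mapMatrix N :=
    fun M N => map_mul _ _ _
  have hone : (C : ℝ →+* ℝ[X]).mapMatrix (1 : Matrix (Fin n) (Fin n) ℝ) = 1 := map_one _
  have key : charmatrix (P * A * Q) =
      (C : ℝ →+* ℝ[X]).mapMatrix P * charmatrix A * (C : ℝ →+* ℝ[X]).mapMatrix Q := by
    unfold charmatrix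
    rw [Matrix.mul_sub, Matrix.sub_mul]
    congr 1
    · -- P' * scalar X * Q' = scalar X
      have hc := (Matrix.scalar_commute (X : ℝ[X]) (fun r => Commute.all _ _)
        ((C : ℝ →+* ℝ[X]).mapMatrix P)).eq
      rw [show (C : ℝ →+* ℝ[X]).mapMatrix P * Matrix.scalar (Fin n) (X : ℝ[X]) *
            (C : ℝ →+* ℝ[X]).mapMatrix Q
          = Matrix.scalar (Fin n) (X : ℝ[X]) *
            ((C : ℝ →+* ℝ[X]).mapMatrix P * (C : ℝ →+* ℝ[X]).mapMatrix Q) by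
        rw [← hc, Matrix.mul_assoc], ← hmul, h1, hone, Matrix.mul_one]
    · rw [← hmul, ← hmul]
  rw [key, Matrix.det_mul, Matrix.det_mul, mul_comm, ← mul_assoc, ← Matrix.det_mul, ← hmul,
    h2, hone, Matrix.det_one, one_mul]

lemma charpoly_diagonal {n : ℕ} (d : Fin n → ℝ) :
    (Matrix.diagonal d).charpoly = ∏ i, (X - C (d i)) := by
  unfold Matrix.charpoly
  have : charmatrix (Matrix.diagonal d) = Matrix.diagonal (fun i => (X : ℝ[X]) - C (d i)) := by
    apply Matrix.ext
    intro i j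
    by_cases h : i = j
    · subst h; simp
    · rw [Matrix.charmatrix_apply_ne _ _ _ h, Matrix.diagonal_apply_ne _ h,
        Matrix.diagonal_apply_ne _ h]
      simp
  rw [this, Matrix.det_diagonal]

lemma sum_f_eigenvalues {n : ℕ} {A : Matrix (Fin n) (Fin n) ℝ} (hA : A.IsHermitian)
    (P Q : Matrix (Fin n) (Fin n) ℝ) (d : Fin n → ℝ)
    (hPQ : P * Q = 1) (hQP : Q * P = 1) (hAeq : A = P * Matrix.diagonal d * Q)
    (g : ℝ → ℝ) :
    ∑ i, g (hA.eigenvalues i) = ∑ i, g (d i) := by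
  have h1 : A.charpoly = ∏ i, (X - C (d i)) := by
    rw [hAeq, charpoly_mul_mul _ _ _ hPQ hQP, charpoly_diagonal]
  have hofReal : (RCLike.ofReal ∘ hA.eigenvalues : Fin n → ℝ) = hA.eigenvalues := by
    funext x
    simp [RCLike.ofReal_real_eq_id]
  have hW1 : (hA.eigenvectorUnitary : Matrix (Fin n) (Fin n) ℝ) *
      star (hA.eigenvectorUnitary : Matrix (Fin n) (Fin n) ℝ) = 1 :=
    Matrix.mem_unitaryGroup_iff.mp hA.eigenvectorUnitary.2
  have hW2 : star (hA.eigenvectorUnitary : Matrix (Fin n) (Fin n) ℝ) *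
      (hA.eigenvectorUnitary : Matrix (Fin n) (Fin n) ℝ) = 1 :=
    Matrix.mem_unitaryGroup_iff'.mp hA.eigenvectorUnitary.2
  have h2 : A.charpoly = ∏ i, (X - C (hA.eigenvalues i)) := by
    conv_lhs => rw [hA.spectral_theorem]
    rw [Unitary.conjStarAlgAut_apply, hofReal, charpoly_mul_mul _ _ _ hW1 hW2, charpoly_diagonal]
  have h3 : Multiset.map hA.eigenvalues Finset.univ.val = Multiset.map d Finset.univ.val := by
    have hroots := congrArg Polynomial.roots (h2.symm.trans h1)
    rwa [Finset.prod_eq_multiset_prod, Finset.prod_eq_multiset_prod,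
      show (Multiset.map (fun i => (X : ℝ[X]) - C (hA.eigenvalues i)) Finset.univ.val)
        = Multiset.map (fun r => (X : ℝ[X]) - C r) (Multiset.map hA.eigenvalues Finset.univ.val)
        from (Multiset.map_map (fun r => (X : ℝ[X]) - C r) hA.eigenvalues Finset.univ.val).symm,
      show (Multiset.map (fun i => (X : ℝ[X]) - C (d i)) Finset.univ.val)
        = Multiset.map (fun r => (X : ℝ[X]) - C r) (Multiset.map d Finset.univ.val)
        from (Multiset.map_map (fun r => (X : ℝ[X]) - C r) d Finset.univ.val).symm,
      Polynomial.roots_multiset_prod_X_sub_C, Polynomial.roots_multiset_prod_X_sub_C] at hroots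
  rw [Finset.sum_eq_multiset_sum, Finset.sum_eq_multiset_sum,
    show Multiset.map (fun i => g (hA.eigenvalues i)) Finset.univ.val
      = Multiset.map g (Multiset.map hA.eigenvalues Finset.univ.val)
      from (Multiset.map_map g hA.eigenvalues Finset.univ.val).symm,
    show Multiset.map (fun i => g (d i)) Finset.univ.val
      = Multiset.map g (Multiset.map d Finset.univ.val)
      from (Multiset.map_map g d Finset.univ.val).symm,
    h3]




lemma trace_transpose_mul_self {m n : ℕ} (A : Matrix (Fin m) (Fin n) ℝ) :
    Matrix.trace (Aᵀ * A) = ∑ i, ∑ j, (A i j) ^ 2 := by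
  simp only [Matrix.trace, Matrix.diag, Matrix.mul_apply, Matrix.transpose_apply, sq]
  exact Finset.sum_comm

lemma fnorm_sq_trace {m n : ℕ} (A : Matrix (Fin m) (Fin n) ℝ) :
    fnorm A ^ 2 = Matrix.trace (Aᵀ * A) := by
  rw [trace_transpose_mul_self, fnorm, Real.sq_sqrt (by positivity)]

lemma trace_transpose_mul_comm {m n : ℕ} (A B : Matrix (Fin m) (Fin n) ℝ) :
    Matrix.trace (Aᵀ * B) = Matrix.trace (Bᵀ * A) := by
  rw [← Matrix.trace_transpose, Matrix.transpose_mul, Matrix.transpose_transpose]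

lemma dual_le {m n : ℕ} (G X : Matrix (Fin m) (Fin n) ℝ)
    (hG : ∀ v : Fin n → ℝ, (G *ᵥ v) ⬝ᵥ (G *ᵥ v) ≤ v ⬝ᵥ v) :
    Matrix.trace (Gᵀ * X) ≤ nuclearNorm X := by
  have hH : (Xᵀ * X).IsHermitian := by
    rw [← Matrix.conjTranspose_eq_transpose_of_trivial]
    exact Matrix.isHermitian_conjTranspose_mul_self X
  set W : Matrix (Fin n) (Fin n) ℝ := (hH.eigenvectorUnitary : Matrix (Fin n) (Fin n) ℝ) with hW
  have hstar : star W = Wᵀ := by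
    rw [Matrix.star_eq_conjTranspose, Matrix.conjTranspose_eq_transpose_of_trivial]
  have hW1 : W * Wᵀ = 1 := by
    rw [← hstar]; exact Matrix.mem_unitaryGroup_iff.mp hH.eigenvectorUnitary.2
  have hW2 : Wᵀ * W = 1 := by
    rw [← hstar]; exact Matrix.mem_unitaryGroup_iff'.mp hH.eigenvectorUnitary.2
  have hofReal : (RCLike.ofReal ∘ hH.eigenvalues : Fin n → ℝ) = hH.eigenvalues := by
    funext x; simp [RCLike.ofReal_real_eq_id]
  have hdiag : (X * W)ᵀ * (X * W) = Matrix.diagonal hH.eigenvalues := by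
    have h := hH.conjStarAlgAut_star_eigenvectorUnitary
    rw [Unitary.conjStarAlgAut_star_apply] at h
    rw [hstar, hofReal] at h
    rw [← h]
    simp only [Matrix.transpose_mul]
    simp only [Matrix.mul_assoc]
    rfl
  have key1 : ∀ j : Fin n, (∑ i, (X *ᵥ (fun k => W k j)) i * (X *ᵥ (fun k => W k j)) i)
      = hH.eigenvalues j := by
    intro j
    have h := congrFun (congrFun hdiag j) j
    rw [Matrix.diagonal_apply_eq] at h
    rw [← h]
    simp [Matrix.mul_apply, Matrix.transpose_apply, Matrix.mulVec, dotProduct, mul_comm]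
  have key2 : ∀ j : Fin n, (∑ k, W k j * W k j) = 1 := by
    intro j
    have h := congrFun (congrFun hW2 j) j
    rw [Matrix.one_apply_eq] at h
    rw [← h]
    simp [Matrix.mul_apply, Matrix.transpose_apply]
  have key3 : Matrix.trace (Gᵀ * X)
      = ∑ j : Fin n, ∑ i : Fin m, (G *ᵥ (fun k => W k j)) i * (X *ᵥ (fun k => W k j)) i := by
    have h1 : Matrix.trace ((G * W)ᵀ * (X * W)) = Matrix.trace (Gᵀ * X) := by
      rw [show (G * W)ᵀ * (X * W) = Wᵀ * ((Gᵀ * X) * W) by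
        simp only [Matrix.transpose_mul, Matrix.mul_assoc],
        Matrix.trace_mul_comm, Matrix.mul_assoc, hW1, Matrix.mul_one]
    rw [← h1]
    simp [Matrix.trace, Matrix.diag, Matrix.mul_apply, Matrix.transpose_apply,
      Matrix.mulVec, dotProduct, mul_comm]
  rw [key3]
  unfold nuclearNorm sv
  apply Finset.sum_le_sum
  intro j _
  have cs := Real.sum_mul_le_sqrt_mul_sqrt Finset.univ
    (fun i => (G *ᵥ (fun k => W k j)) i) (fun i => (X *ᵥ (fun k => W k j)) i)
  refine le_trans cs ?_
  have hb1 : Real.sqrt (∑ i, (G *ᵥ (fun k => W k j)) i ^ 2) ≤ 1 := by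
    rw [show (∑ i, (G *ᵥ (fun k => W k j)) i ^ 2)
        = (G *ᵥ (fun k => W k j)) ⬝ᵥ (G *ᵥ (fun k => W k j)) by
      simp [dotProduct, sq]]
    calc Real.sqrt ((G *ᵥ (fun k => W k j)) ⬝ᵥ (G *ᵥ (fun k => W k j)))
        ≤ Real.sqrt ((fun k => W k j) ⬝ᵥ (fun k => W k j)) := Real.sqrt_le_sqrt (hG _)
      _ = 1 := by
          rw [show ((fun k => W k j) ⬝ᵥ (fun k => W k j)) = 1 by
            simpa [dotProduct] using key2 j]
          exact Real.sqrt_one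
  have hb2 : Real.sqrt (∑ i, (X *ᵥ (fun k => W k j)) i ^ 2)
      = Real.sqrt (hH.eigenvalues j) := by
    rw [show (∑ i, (X *ᵥ (fun k => W k j)) i ^ 2)
        = ∑ i, (X *ᵥ (fun k => W k j)) i * (X *ᵥ (fun k => W k j)) i by
      simp [sq], key1 j]
  rw [hb2]
  have hnn : 0 ≤ Real.sqrt (hH.eigenvalues j) := Real.sqrt_nonneg _
  nlinarith [Real.sqrt_nonneg (∑ i, (G *ᵥ (fun k => W k j)) i ^ 2)]


end Stmt6Aux

open Stmt6Aux

/-- Singular value soft-thresholding solves the nuclear norm proximal problem: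
if `Y = UΣVᵀ` with `U`, `V` orthogonal and `Σ` (rectangular) diagonal with nonnegative
entries, then `X̂ = U S_{w/2}(Σ) Vᵀ` minimizes `‖Y − X‖_F² + w‖X‖_*`. -/
theorem stmt6 {m n : ℕ} (U : Matrix (Fin m) (Fin m) ℝ) (V : Matrix (Fin n) (Fin n) ℝ)
    (S : Matrix (Fin m) (Fin n) ℝ) (Y : Matrix (Fin m) (Fin n) ℝ)
    (hU₁ : U * Uᵀ = 1) (hU₂ : Uᵀ * U = 1) (hV₁ : V * Vᵀ = 1) (hV₂ : Vᵀ * V = 1)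
    (hSdiag : ∀ (i : Fin m) (j : Fin n), (i : ℕ) ≠ (j : ℕ) → S i j = 0)
    (hSnn : ∀ (i : Fin m) (j : Fin n), 0 ≤ S i j)
    (hY : Y = U * S * Vᵀ) (w : ℝ) (hw : 0 ≤ w)
    (Xhat : Matrix (Fin m) (Fin n) ℝ)
    (hXhat : Xhat = U * (Matrix.of fun (i : Fin m) (j : Fin n) =>
      if (i : ℕ) = (j : ℕ) then max (S i j - w / 2) 0 else 0) * Vᵀ) :
    ∀ X : Matrix (Fin m) (Fin n) ℝ,
      fnorm (Y - Xhat) ^ 2 + w * nuclearNorm Xhat ≤ fnorm (Y - X) ^ 2 + w * nuclearNorm X := by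
  intro X
  by_cases hw0 : w = 0
  · -- trivial case : Xhat = Y
    subst hw0
    have hXY : Xhat = Y := by
      rw [hXhat, hY]
      congr 1
      congr 1
      apply Matrix.ext
      intro i j
      rw [Matrix.of_apply]
      by_cases h : (i : ℕ) = (j : ℕ)
      · rw [if_pos h]
        have : S i j - 0 / 2 = S i j := by ring
        rw [this, max_eq_left (hSnn i j)]
      · rw [if_neg h, hSdiag i j h]
    rw [hXY]
    simp only [sub_self, zero_mul, add_zero]
    have h0 : fnorm (0 : Matrix (Fin m) (Fin n) ℝ) = 0 := by
      simp [fnorm]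
    rw [h0]
    nlinarith [sq_nonneg (fnorm (Y - X))]
  · have hwpos : 0 < w := lt_of_le_of_ne hw (Ne.symm hw0)
    have hwne : w ≠ 0 := hw0
    -- diagonal entry functions
    set f : Fin m → ℝ := fun i =>
      if h : (i : ℕ) < n then max (S i ⟨(i : ℕ), h⟩ - w / 2) 0 else 0 with hf
    set g : Fin m → ℝ := fun i =>
      if h : (i : ℕ) < n then min (2 * S i ⟨(i : ℕ), h⟩ / w) 1 else 0 with hg
    have hfnn : ∀ i, 0 ≤ f i := by
      intro i; rw [hf]; dsimp only; split_ifs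
      · exact le_max_right _ _
      · exact le_refl 0
    have hg0 : ∀ i, 0 ≤ g i := by
      intro i; rw [hg]; dsimp only; split_ifs with h
      · exact le_min (div_nonneg (by linarith [hSnn i ⟨(i : ℕ), h⟩]) hw) zero_le_one
      · exact le_refl 0
    have hg1 : ∀ i, g i ≤ 1 := by
      intro i; rw [hg]; dsimp only; split_ifs with h
      · exact min_le_right _ _
      · exact zero_le_one
    have hgf : ∀ i, g i * f i = f i := by
      intro i; rw [hf, hg]; dsimp only; split_ifs with h
      · rcases le_total (S i ⟨(i : ℕ), h⟩) (w / 2) with hc | hc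
        · rw [max_eq_right (by linarith), mul_zero]
        · rw [min_eq_right (by rw [le_div_iff₀ hwpos]; linarith), one_mul]
      · rw [mul_zero]
    -- Xhat in terms of rd f
    have hT : Xhat = U * (rd f : Matrix (Fin m) (Fin n) ℝ) * Vᵀ := by
      rw [hXhat]
      congr 1
      congr 1
      apply Matrix.ext
      intro i j
      rw [Matrix.of_apply]
      show _ = (if (i : ℕ) = (j : ℕ) then f i else 0)
      by_cases h : (i : ℕ) = (j : ℕ)
      · rw [if_pos h, if_pos h, hf]
        have hin : (i : ℕ) < n := by rw [h]; exact j.2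
        dsimp only
        rw [dif_pos hin]
        have hj : (⟨(i : ℕ), hin⟩ : Fin n) = j := Fin.ext h
        rw [hj]
      · rw [if_neg h, if_neg h]
    -- the subgradient matrix G = U * rd g * Vᵀ
    have hA : Y - Xhat = (w / 2) • (U * (rd g : Matrix (Fin m) (Fin n) ℝ) * Vᵀ) := by
      rw [hY, hT, ← Matrix.sub_mul, ← Matrix.mul_sub, ← Matrix.smul_mul, ← Matrix.mul_smul]
      congr 2
      apply Matrix.ext
      intro i j
      rw [Matrix.sub_apply, Matrix.smul_apply]
      show S i j - (if (i : ℕ) = (j : ℕ) then f i else 0)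
          = (w / 2) * (if (i : ℕ) = (j : ℕ) then g i else 0)
      by_cases h : (i : ℕ) = (j : ℕ)
      · rw [if_pos h, if_pos h, hf, hg]
        have hin : (i : ℕ) < n := by rw [h]; exact j.2
        dsimp only
        rw [dif_pos hin, dif_pos hin]
        have hj : (⟨(i : ℕ), hin⟩ : Fin n) = j := Fin.ext h
        rw [hj]
        rcases le_total (S i j) (w / 2) with hc | hc
        · rw [max_eq_right (by linarith), min_eq_left (by
            rw [div_le_one hwpos]; linarith)]
          rw [sub_zero]
          field_simp
        · rw [max_eq_left (by linarith), min_eq_right (by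
            rw [le_div_iff₀ hwpos]; linarith)]
          ring
      · rw [if_neg h, if_neg h, hSdiag i j h]
        ring
    have hGnorm : ∀ v : Fin n → ℝ,
        ((U * (rd g : Matrix (Fin m) (Fin n) ℝ) * Vᵀ) *ᵥ v) ⬝ᵥ
          ((U * (rd g : Matrix (Fin m) (Fin n) ℝ) * Vᵀ) *ᵥ v) ≤ v ⬝ᵥ v := by
      intro v
      have hsplit : (U * (rd g : Matrix (Fin m) (Fin n) ℝ) * Vᵀ) *ᵥ v
          = U *ᵥ ((rd g : Matrix (Fin m) (Fin n) ℝ) *ᵥ (Vᵀ *ᵥ v)) := by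
        rw [Matrix.mulVec_mulVec, Matrix.mulVec_mulVec]
      rw [hsplit, dot_mulVec_self U hU₂]
      calc ((rd g : Matrix (Fin m) (Fin n) ℝ) *ᵥ (Vᵀ *ᵥ v)) ⬝ᵥ
            ((rd g : Matrix (Fin m) (Fin n) ℝ) *ᵥ (Vᵀ *ᵥ v))
          ≤ (Vᵀ *ᵥ v) ⬝ᵥ (Vᵀ *ᵥ v) := rd_mulVec_dot_le g hg0 hg1 _
        _ = v ⬝ᵥ v := dot_mulVec_self Vᵀ (by rw [Matrix.transpose_transpose, hV₁]) v
    -- trace (Gᵀ * Xhat) = ∑ thresholded values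
    have hmulmid : ∀ p q : Fin m → ℝ,
        (U * (rd p : Matrix (Fin m) (Fin n) ℝ) * Vᵀ)ᵀ *
          (U * (rd q : Matrix (Fin m) (Fin n) ℝ) * Vᵀ)
          = V * ((rd p : Matrix (Fin m) (Fin n) ℝ)ᵀ *
              (rd q : Matrix (Fin m) (Fin n) ℝ)) * Vᵀ := by
      intro p q
      simp only [Matrix.transpose_mul, Matrix.transpose_transpose, Matrix.mul_assoc]
      congr 2
      rw [← Matrix.mul_assoc Uᵀ U, hU₂, Matrix.one_mul]
    have htraceV : ∀ M : Matrix (Fin n) (Fin n) ℝ,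
        Matrix.trace (V * M * Vᵀ) = Matrix.trace M := by
      intro M
      rw [Matrix.trace_mul_comm, ← Matrix.mul_assoc, hV₂, Matrix.one_mul]
    have hGXhat : Matrix.trace ((U * (rd g : Matrix (Fin m) (Fin n) ℝ) * Vᵀ)ᵀ * Xhat)
        = ∑ j : Fin n, (if h : (j : ℕ) < m then f ⟨(j : ℕ), h⟩ else 0) := by
      rw [hT, hmulmid g f, htraceV, rd_transpose_mul_rd, Matrix.trace_diagonal]
      apply Finset.sum_congr rfl
      intro j _
      split_ifs with h
      · exact hgf _
      · rfl
    -- nuclear norm of Xhat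
    have hnnXhat : nuclearNorm Xhat
        = ∑ j : Fin n, (if h : (j : ℕ) < m then f ⟨(j : ℕ), h⟩ else 0) := by
      have hAeq : Xhatᴴ * Xhat = V * Matrix.diagonal
          (fun j : Fin n => if h : (j : ℕ) < m then f ⟨(j : ℕ), h⟩ * f ⟨(j : ℕ), h⟩ else 0)
          * Vᵀ := by
        rw [Matrix.conjTranspose_eq_transpose_of_trivial, hT, hmulmid f f,
          rd_transpose_mul_rd]
      have := sum_f_eigenvalues (show (Xhatᵀ * Xhat).IsHermitian by
          rw [← Matrix.conjTranspose_eq_transpose_of_trivial]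
          exact Matrix.isHermitian_conjTranspose_mul_self Xhat) V Vᵀ
        (fun j : Fin n => if h : (j : ℕ) < m then f ⟨(j : ℕ), h⟩ * f ⟨(j : ℕ), h⟩ else 0)
        hV₁ hV₂ hAeq Real.sqrt
      unfold nuclearNorm sv
      rw [this]
      apply Finset.sum_congr rfl
      intro j _
      split_ifs with h
      · exact Real.sqrt_mul_self (hfnn _)
      · exact Real.sqrt_zero
    -- dual bound for arbitrary X
    have hdual : Matrix.trace ((U * (rd g : Matrix (Fin m) (Fin n) ℝ) * Vᵀ)ᵀ * X)
        ≤ nuclearNorm X := dual_le _ X hGnorm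
    -- expansion of the quadratic term
    have hsplit : Y - X = (Y - Xhat) + (Xhat - X) := (sub_add_sub_cancel Y Xhat X).symm
    have e1 : fnorm (Y - X) ^ 2 = fnorm (Y - Xhat) ^ 2
        + 2 * Matrix.trace ((Y - Xhat)ᵀ * (Xhat - X))
        + Matrix.trace ((Xhat - X)ᵀ * (Xhat - X)) := by
      rw [fnorm_sq_trace, fnorm_sq_trace, hsplit, Matrix.transpose_add, Matrix.add_mul,
        Matrix.mul_add, Matrix.mul_add, Matrix.trace_add, Matrix.trace_add, Matrix.trace_add,
        trace_transpose_mul_comm (Xhat - X) (Y - Xhat)]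
      ring
    have e2 : Matrix.trace ((Y - Xhat)ᵀ * (Xhat - X))
        = (w / 2) * (Matrix.trace ((U * (rd g : Matrix (Fin m) (Fin n) ℝ) * Vᵀ)ᵀ * Xhat)
          - Matrix.trace ((U * (rd g : Matrix (Fin m) (Fin n) ℝ) * Vᵀ)ᵀ * X)) := by
      rw [hA, Matrix.transpose_smul, Matrix.smul_mul, Matrix.trace_smul, Matrix.mul_sub,
        Matrix.trace_sub]
      simp [smul_eq_mul]
    have e3 : 0 ≤ Matrix.trace ((Xhat - X)ᵀ * (Xhat - X)) := by
      rw [trace_transpose_mul_self]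
      positivity
    have e4 : w * Matrix.trace ((U * (rd g : Matrix (Fin m) (Fin n) ℝ) * Vᵀ)ᵀ * X)
        ≤ w * nuclearNorm X := mul_le_mul_of_nonneg_left hdual hw
    rw [← hGXhat] at hnnXhat
    rw [hnnXhat]
    have e5 : 2 * Matrix.trace ((Y - Xhat)ᵀ * (Xhat - X))
        = w * Matrix.trace ((U * (rd g : Matrix (Fin m) (Fin n) ℝ) * Vᵀ)ᵀ * Xhat)
          - w * Matrix.trace ((U * (rd g : Matrix (Fin m) (Fin n) ℝ) * Vᵀ)ᵀ * X) := by
      rw [e2]; ring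
    linarith [e1, e3, e4, e5]
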